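/- Every multigraph G is an induced sub-multigraph of a ρ-regular multigraph R with ω(R) ≤ ρ, where ρ = max(Δ(G), ω(G)). -/

import Mathlib

open Finset

/-- A multigraph: a finite vertex type, a finite edge type, an endpoints map
into unordered pairs of vertices, and no loops. -/
structure Multigraph where
  V : Type
  E : Type
  fintypeV : Fintype V
  decEqV : DecidableEq V
  fintypeE : Fintype E
  decEqE : DecidableEq E
  ends : E → Sym2 V
  noLoops : ∀ e, ¬ (ends e).IsDiag

attribute [instance] Multigraph.fintypeV Multigraph.decEqV Multigraph.fintypeE Multigraph.decEqE

namespace Multigraph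

open scoped Classical

variable (G : Multigraph)

/-- The degree of a vertex: the number of edges incident to it. -/
noncomputable def degree (x : G.V) : ℕ :=
  (Finset.univ.filter fun e => x ∈ G.ends e).card

/-- The maximum vertex degree Δ(G). -/
noncomputable def maxDegree : ℕ :=
  Finset.univ.sup fun x : G.V => G.degree x

/-- E(S): the edges with both endpoints in S. -/
noncomputable def edgesIn (S : Finset G.V) : Finset G.E :=
  Finset.univ.filter fun e => ∀ x ∈ G.ends e, x ∈ S

/-- Ceiling division of natural numbers: ⌈a / b⌉. -/
def ceilDiv (a b : ℕ) : ℕ := (a + b - 1) / b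

/-- The density ω(G) = max over vertex subsets S with |S| ≥ 2 of ⌈|E(S)| / ⌊|S|/2⌋⌉. -/
noncomputable def density : ℕ :=
  (Finset.univ.powerset.filter fun S : Finset G.V => 2 ≤ S.card).sup
    fun S => ceilDiv (G.edgesIn S).card (S.card / 2)

/-- A proper edge-coloring with colors `Fin c`: adjacent (distinct, sharing an endpoint)
edges receive distinct colors. -/
def IsProperEdgeColoring (c : ℕ) (col : G.E → Fin c) : Prop :=
  ∀ e f : G.E, e ≠ f → (∃ x : G.V, x ∈ G.ends e ∧ x ∈ G.ends f) → col e ≠ col f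

/-- The chromatic index χ'(G): the least number of colors in a proper edge-coloring. -/
noncomputable def chromaticIndex : ℕ :=
  sInf {c : ℕ | ∃ col : G.E → Fin c, G.IsProperEdgeColoring c col}

/-- μ(x): the set of colors used on the edges incident to x. -/
noncomputable def mu {c : ℕ} (col : G.E → Fin c) (x : G.V) : Finset (Fin c) :=
  (Finset.univ.filter fun e => x ∈ G.ends e).image col

/-- A degree-coloring with c colors: the degree condition and the cover condition. -/
def IsDegreeColoring (c : ℕ) (μ : G.V → Finset (Fin c)) : Prop :=
  (∀ x : G.V, (μ x).card = G.degree x) ∧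
  ∀ S : Finset G.V,
    (G.edgesIn S).card ≤ ∑ i : Fin c, (S.filter fun x => i ∈ μ x).card / 2

/-- The degree-coloring index τ(G): the least c admitting a degree-coloring. -/
noncomputable def tau : ℕ :=
  sInf {c : ℕ | ∃ μ : G.V → Finset (Fin c), G.IsDegreeColoring c μ}

/-- A matching: a set of pairwise non-adjacent edges. -/
def IsMatching (M : Finset G.E) : Prop :=
  ∀ e ∈ M, ∀ f ∈ M, e ≠ f → ∀ x : G.V, ¬ (x ∈ G.ends e ∧ x ∈ G.ends f)

/-- π(F): the maximum size of a matching consisting of edges from F. -/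
noncomputable def matchingNumber (F : Finset G.E) : ℕ :=
  (F.powerset.filter fun M => G.IsMatching M).sup Finset.card

/-- ω*(G) = max over nonempty F ⊆ E of ⌈|F| / π(F)⌉. -/
noncomputable def omegaStar : ℕ :=
  (Finset.univ.powerset.filter fun F : Finset G.E => F.Nonempty).sup
    fun F => ceilDiv F.card (G.matchingNumber F)

/-- H is a sub-multigraph of G. -/
def IsSub (H G : Multigraph) : Prop :=
  ∃ (f : H.V ↪ G.V) (g : H.E ↪ G.E),
    ∀ e : H.E, G.ends (g e) = (H.ends e).map f

/-- H is an induced sub-multigraph of G: additionally every edge of G with both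
endpoints in the image of the vertex embedding comes from H. -/
def IsInducedSub (H G : Multigraph) : Prop :=
  ∃ (f : H.V ↪ G.V) (g : H.E ↪ G.E),
    (∀ e : H.E, G.ends (g e) = (H.ends e).map f) ∧
    ∀ e' : G.E, (∀ x ∈ G.ends e', x ∈ Set.range f) → e' ∈ Set.range g

/-- Regularization: if G is regular with ω(G) ≤ Δ(G), R(G) = G; otherwise take two
disjoint copies of G and join each vertex x to its copy by
max(Δ(G), ω(G)) − deg_G(x) parallel edges. -/
noncomputable def regularize (G : Multigraph) : Multigraph :=
  if (∀ x : G.V, G.degree x = G.maxDegree) ∧ G.density ≤ G.maxDegree then G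
  else
    { V := G.V ⊕ G.V
      E := G.E ⊕ G.E ⊕ (Σ x : G.V, Fin (max G.maxDegree G.density - G.degree x))
      fintypeV := inferInstance
      decEqV := inferInstance
      fintypeE := inferInstance
      decEqE := inferInstance
      ends := fun e =>
        match e with
        | Sum.inl e => (G.ends e).map Sum.inl
        | Sum.inr (Sum.inl e) => (G.ends e).map Sum.inr
        | Sum.inr (Sum.inr p) => s(Sum.inl p.1, Sum.inr p.1)
      noLoops := by
        rintro (e | e | p)
        · rw [Sym2.isDiag_map Sum.inl_injective]; exact G.noLoops e
        · rw [Sym2.isDiag_map Sum.inr_injective]; exact G.noLoops e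
        · rw [Sym2.mk_isDiag_iff]; simp }

end Multigraph

namespace Multigraph

open scoped Classical

lemma ceilDiv_le_iff' {a b c : ℕ} (hb : 0 < b) : ceilDiv a b ≤ c ↔ a ≤ c * b := by
  unfold ceilDiv
  rw [Nat.div_le_iff_le_mul_add_pred hb, mul_comm c b]
  set k := b * c
  omega

lemma sym2_exists_ne {V : Type} (s : Sym2 V) (h : ¬ s.IsDiag) :
    ∃ u v, u ≠ v ∧ s = s(u, v) := by
  induction s using Sym2.ind with
  | _ u v => exact ⟨u, v, by simpa using h, rfl⟩

lemma card_filter_sum {α β : Type} [Fintype α] [Fintype β] [Fintype (α ⊕ β)] (P : α ⊕ β → Prop) [DecidablePred P] :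
    (Finset.univ.filter P).card =
      (Finset.univ.filter fun a => P (Sum.inl a)).card +
      (Finset.univ.filter fun b => P (Sum.inr b)).card := by
  rw [← Fintype.card_subtype, ← Fintype.card_subtype, ← Fintype.card_subtype,
    ← Fintype.card_sum]
  exact Fintype.card_congr Equiv.subtypeSum

lemma card_filter_sigma {α : Type} [Fintype α] (n : α → ℕ) [Fintype (Σ x : α, Fin (n x))] (q : α → Prop) [DecidablePred q] [DecidablePred fun p : Σ x : α, Fin (n x) => q p.1] :
    (Finset.univ.filter fun p : Σ x : α, Fin (n x) => q p.1).card =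
      ∑ x ∈ Finset.univ.filter q, n x := by
  classical
  have h : (Finset.univ.filter fun p : Σ x : α, Fin (n x) => q p.1)
      = (Finset.univ.filter q).sigma fun x => (Finset.univ : Finset (Fin (n x))) := by
    ext p; simp [Finset.mem_sigma]
  rw [h, Finset.card_sigma]
  simp

variable (G : Multigraph)

lemma degree_le_maxDegree (x : G.V) : G.degree x ≤ G.maxDegree :=
  Finset.le_sup (Finset.mem_univ x)

/-- ρ = max(Δ(G), ω(G)). -/
noncomputable def rho (G : Multigraph) : ℕ := max G.maxDegree G.density

lemma degree_le_rho (x : G.V) : G.degree x ≤ G.rho :=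
  le_trans (G.degree_le_maxDegree x) (le_max_left _ _)

lemma edgesIn_mono {S T : Finset G.V} (h : S ⊆ T) : G.edgesIn S ⊆ G.edgesIn T := by
  intro e he
  rw [edgesIn, Finset.mem_filter] at he ⊢
  exact ⟨he.1, fun x hx => h (he.2 x hx)⟩

lemma edgesIn_eq_empty {S : Finset G.V} (h : S.card ≤ 1) : G.edgesIn S = ∅ := by
  rw [Finset.eq_empty_iff_forall_notMem]
  intro e he
  rw [edgesIn, Finset.mem_filter] at he
  obtain ⟨u, v, huv, hs⟩ := sym2_exists_ne (G.ends e) (G.noLoops e)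
  have hu : u ∈ S := he.2 u (by rw [hs]; simp)
  have hv : v ∈ S := he.2 v (by rw [hs]; simp)
  have hsub : ({u, v} : Finset G.V) ⊆ S := by
    intro z hz; simp at hz; rcases hz with rfl | rfl <;> assumption
  have := Finset.card_le_card hsub
  rw [Finset.card_pair huv] at this
  omega

lemma card_edgesIn_le (S : Finset G.V) :
    (G.edgesIn S).card ≤ G.density * (S.card / 2) := by
  rcases le_or_gt S.card 1 with h | h
  · rw [G.edgesIn_eq_empty h]; simp
  · have hmem : S ∈ Finset.univ.powerset.filter fun S : Finset G.V => 2 ≤ S.card := by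
      simp only [Finset.mem_filter, Finset.mem_powerset]
      exact ⟨Finset.subset_univ _, h⟩
    have h2 := Finset.le_sup (f := fun S : Finset G.V =>
      ceilDiv (G.edgesIn S).card (S.card / 2)) hmem
    rw [ceilDiv_le_iff' (by omega)] at h2
    exact h2

lemma card_edgesIn_le_rho (S : Finset G.V) :
    (G.edgesIn S).card ≤ G.rho * (S.card / 2) :=
  le_trans (G.card_edgesIn_le S) (Nat.mul_le_mul_right _ (le_max_right _ _))

/-- The doubled graph: two copies of G, with ρ − deg(x) parallel edges joining
the two copies of each vertex x. -/
noncomputable def double (G : Multigraph) : Multigraph where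
  V := G.V ⊕ G.V
  E := G.E ⊕ G.E ⊕ (Σ x : G.V, Fin (G.rho - G.degree x))
  fintypeV := inferInstance
  decEqV := inferInstance
  fintypeE := inferInstance
  decEqE := inferInstance
  ends := fun e =>
    match e with
    | Sum.inl e => (G.ends e).map Sum.inl
    | Sum.inr (Sum.inl e) => (G.ends e).map Sum.inr
    | Sum.inr (Sum.inr p) => s(Sum.inl p.1, Sum.inr p.1)
  noLoops := by
    rintro (e | e | p)
    · rw [Sym2.isDiag_map Sum.inl_injective]; exact G.noLoops e
    · rw [Sym2.isDiag_map Sum.inr_injective]; exact G.noLoops e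
    · rw [Sym2.mk_isDiag_iff]; simp

lemma double_degree (y : G.V ⊕ G.V) : G.double.degree y = G.rho := by
  obtain x | x := y
  · rw [show G.double.degree (Sum.inl x) = (Finset.univ.filter fun e : G.E ⊕ G.E ⊕ (Σ x : G.V, Fin (G.rho - G.degree x)) =>
      Sum.inl x ∈ G.double.ends e).card by unfold degree; congr 1; exact Finset.filter_congr_decidable _ _ _]
    rw [card_filter_sum, card_filter_sum]
    have h1 : (Finset.univ.filter fun e : G.E => Sum.inl x ∈ G.double.ends (Sum.inl e))
        = Finset.univ.filter fun e : G.E => x ∈ G.ends e := by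
      ext e
      simp only [Finset.mem_filter, Finset.mem_univ, true_and]
      erw [Sym2.mem_map]
      simp
    have h2 : (Finset.univ.filter fun e : G.E =>
        Sum.inl x ∈ G.double.ends (Sum.inr (Sum.inl e))) = ∅ := by
      ext e
      simp only [Finset.mem_filter, Finset.mem_univ, true_and]
      erw [Sym2.mem_map]
      simp
    have h3 : (Finset.univ.filter fun p : Σ x : G.V, Fin (G.rho - G.degree x) =>
        Sum.inl x ∈ G.double.ends (Sum.inr (Sum.inr p)))
        = Finset.univ.filter fun p : Σ x : G.V, Fin (G.rho - G.degree x) => p.1 = x := by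
      ext p
      simp only [Finset.mem_filter, Finset.mem_univ, true_and]
      erw [Sym2.mem_iff]
      simp [eq_comm]
    rw [h1, h2, h3, card_filter_sigma _ (fun z : G.V => z = x)]
    have h4 : (Finset.univ.filter fun z : G.V => z = x) = {x} := by ext z; simp
    rw [h4, Finset.sum_singleton]
    have := G.degree_le_rho x
    show G.degree x + (0 + (G.rho - G.degree x)) = G.rho
    omega
  · rw [show G.double.degree (Sum.inr x) = (Finset.univ.filter fun e : G.E ⊕ G.E ⊕ (Σ x : G.V, Fin (G.rho - G.degree x)) =>
      Sum.inr x ∈ G.double.ends e).card by unfold degree; congr 1; exact Finset.filter_congr_decidable _ _ _]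
    rw [card_filter_sum, card_filter_sum]
    have h1 : (Finset.univ.filter fun e : G.E => Sum.inr x ∈ G.double.ends (Sum.inl e))
        = ∅ := by
      ext e
      simp only [Finset.mem_filter, Finset.mem_univ, true_and]
      erw [Sym2.mem_map]
      simp
    have h2 : (Finset.univ.filter fun e : G.E =>
        Sum.inr x ∈ G.double.ends (Sum.inr (Sum.inl e)))
        = Finset.univ.filter fun e : G.E => x ∈ G.ends e := by
      ext e
      simp only [Finset.mem_filter, Finset.mem_univ, true_and]
      erw [Sym2.mem_map]
      simp
    have h3 : (Finset.univ.filter fun p : Σ x : G.V, Fin (G.rho - G.degree x) =>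
        Sum.inr x ∈ G.double.ends (Sum.inr (Sum.inr p)))
        = Finset.univ.filter fun p : Σ x : G.V, Fin (G.rho - G.degree x) => p.1 = x := by
      ext p
      simp only [Finset.mem_filter, Finset.mem_univ, true_and]
      erw [Sym2.mem_iff]
      simp [eq_comm]
    rw [h1, h2, h3, card_filter_sigma _ (fun z : G.V => z = x)]
    have h4 : (Finset.univ.filter fun z : G.V => z = x) = {x} := by ext z; simp
    rw [h4, Finset.sum_singleton]
    have := G.degree_le_rho x
    show 0 + (G.degree x + (G.rho - G.degree x)) = G.rho
    omega
lemma double_edgesIn_card (S : Finset (G.V ⊕ G.V)) :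
    (G.double.edgesIn S).card =
      (G.edgesIn (Finset.univ.filter fun x => Sum.inl x ∈ S)).card +
      ((G.edgesIn (Finset.univ.filter fun x => Sum.inr x ∈ S)).card +
        ∑ x ∈ (Finset.univ.filter fun x => Sum.inl x ∈ S) ∩
            (Finset.univ.filter fun x => Sum.inr x ∈ S), (G.rho - G.degree x)) := by
  rw [show (G.double.edgesIn S).card = (Finset.univ.filter fun e : G.E ⊕ G.E ⊕ (Σ x : G.V, Fin (G.rho - G.degree x)) =>
      ∀ z ∈ G.double.ends e, z ∈ S).card by unfold edgesIn; congr 1; exact Finset.filter_congr_decidable _ _ _]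
  rw [card_filter_sum, card_filter_sum]
  have h1 : (Finset.univ.filter fun e : G.E =>
      ∀ z ∈ G.double.ends (Sum.inl e), z ∈ S)
      = G.edgesIn (Finset.univ.filter fun x => Sum.inl x ∈ S) := by
    ext e
    simp only [Finset.mem_filter, Finset.mem_univ, true_and, edgesIn]
    constructor
    · intro h x hx; exact h _ (by erw [Sym2.mem_map]; exact ⟨x, hx, rfl⟩)
    · intro h z hz; erw [Sym2.mem_map] at hz; obtain ⟨x, hx, rfl⟩ := hz; exact h x hx
  have h2 : (Finset.univ.filter fun e : G.E =>
      ∀ z ∈ G.double.ends (Sum.inr (Sum.inl e)), z ∈ S)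
      = G.edgesIn (Finset.univ.filter fun x => Sum.inr x ∈ S) := by
    ext e
    simp only [Finset.mem_filter, Finset.mem_univ, true_and, edgesIn]
    constructor
    · intro h x hx; exact h _ (by erw [Sym2.mem_map]; exact ⟨x, hx, rfl⟩)
    · intro h z hz; erw [Sym2.mem_map] at hz; obtain ⟨x, hx, rfl⟩ := hz; exact h x hx
  have h3 : (Finset.univ.filter fun p : Σ x : G.V, Fin (G.rho - G.degree x) =>
      ∀ z ∈ G.double.ends (Sum.inr (Sum.inr p)), z ∈ S)
      = Finset.univ.filter fun p : Σ x : G.V, Fin (G.rho - G.degree x) =>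
          Sum.inl p.1 ∈ S ∧ Sum.inr p.1 ∈ S := by
    ext p
    simp only [Finset.mem_filter, Finset.mem_univ, true_and]
    exact Sym2.ball
  rw [h1, h2, h3, card_filter_sigma _ (fun z : G.V => Sum.inl z ∈ S ∧ Sum.inr z ∈ S)]
  have h4 : (Finset.univ.filter fun z : G.V => Sum.inl z ∈ S ∧ Sum.inr z ∈ S)
      = (Finset.univ.filter fun x : G.V => Sum.inl x ∈ S) ∩
        (Finset.univ.filter fun x : G.V => Sum.inr x ∈ S) := by
    ext z
    simp [Finset.mem_inter]
  rw [h4]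

lemma double_density_le : G.double.density ≤ G.rho := by
  apply Finset.sup_le
  intro S hS
  rw [Finset.mem_filter] at hS
  have hS2 : 2 ≤ S.card := hS.2
  rw [ceilDiv_le_iff' (by omega)]
  -- reduce to the sum-type view of S
  let S' : Finset (G.V ⊕ G.V) := S
  have hcard : S.card = S'.card := rfl
  set A := Finset.univ.filter fun x : G.V => Sum.inl x ∈ S' with hA
  set B := Finset.univ.filter fun x : G.V => Sum.inr x ∈ S' with hB
  set D := A ∩ B with hD
  have hDA : D ⊆ A := Finset.inter_subset_left
  have hDB : D ⊆ B := Finset.inter_subset_right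
  have hsplit : (G.double.edgesIn S).card =
      (G.edgesIn A).card + ((G.edgesIn B).card + ∑ x ∈ D, (G.rho - G.degree x)) :=
    G.double_edgesIn_card S'
  -- the "extra" edge sets
  set IA := G.edgesIn A \ G.edgesIn (A \ D) with hIA
  set IB := G.edgesIn B \ G.edgesIn (B \ D) with hIB
  have hAcard : (G.edgesIn A).card = (G.edgesIn (A \ D)).card + IA.card := by
    rw [hIA, add_comm]
    exact (Finset.card_sdiff_add_card_eq_card
      (G.edgesIn_mono (Finset.sdiff_subset))).symm
  have hBcard : (G.edgesIn B).card = (G.edgesIn (B \ D)).card + IB.card := by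
    rw [hIB, add_comm]
    exact (Finset.card_sdiff_add_card_eq_card
      (G.edgesIn_mono (Finset.sdiff_subset))).symm
  -- key properties of IA, IB
  have hIAprop : ∀ e ∈ IA, (∀ w ∈ G.ends e, w ∈ A) ∧ ∃ w ∈ G.ends e, w ∈ D := by
    intro e he
    rw [hIA, Finset.mem_sdiff, edgesIn, edgesIn, Finset.mem_filter, Finset.mem_filter] at he
    obtain ⟨⟨-, hall⟩, hnot⟩ := he
    push_neg at hnot
    obtain ⟨w, hw1, hw2⟩ := hnot (Finset.mem_univ e)
    refine ⟨hall, w, hw1, ?_⟩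
    rw [Finset.mem_sdiff] at hw2
    push_neg at hw2
    exact hw2 (hall w hw1)
  have hIBprop : ∀ e ∈ IB, (∀ w ∈ G.ends e, w ∈ B) ∧ ∃ w ∈ G.ends e, w ∈ D := by
    intro e he
    rw [hIB, Finset.mem_sdiff, edgesIn, edgesIn, Finset.mem_filter, Finset.mem_filter] at he
    obtain ⟨⟨-, hall⟩, hnot⟩ := he
    push_neg at hnot
    obtain ⟨w, hw1, hw2⟩ := hnot (Finset.mem_univ e)
    refine ⟨hall, w, hw1, ?_⟩
    rw [Finset.mem_sdiff] at hw2
    push_neg at hw2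
    exact hw2 (hall w hw1)
  -- double counting: IA.card + IB.card ≤ ∑ x ∈ D, deg x
  have hcount : IA.card + IB.card ≤ ∑ x ∈ D, G.degree x := by
    have hswap : ∑ x ∈ D, G.degree x
        = ∑ e : G.E, (D.filter fun x => x ∈ G.ends e).card := by
      simp only [degree, Finset.card_filter]
      rw [Finset.sum_comm]
    rw [hswap]
    have h1 : ∀ e ∈ (IA ∪ IB) \ (IA ∩ IB),
        1 ≤ (D.filter fun x => x ∈ G.ends e).card := by
      intro e he
      rw [Finset.mem_sdiff, Finset.mem_union] at he
      have hex : ∃ w ∈ G.ends e, w ∈ D := by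
        rcases he.1 with h | h
        · exact (hIAprop e h).2
        · exact (hIBprop e h).2
      obtain ⟨w, hw1, hw2⟩ := hex
      refine Finset.card_pos.mpr ⟨w, ?_⟩
      rw [Finset.mem_filter]
      exact ⟨hw2, hw1⟩
    have h2 : ∀ e ∈ IA ∩ IB, 2 ≤ (D.filter fun x => x ∈ G.ends e).card := by
      intro e he
      rw [Finset.mem_inter] at he
      obtain ⟨u, v, huv, hs⟩ := sym2_exists_ne (G.ends e) (G.noLoops e)
      have huA : u ∈ A := (hIAprop e he.1).1 u (by rw [hs]; simp)
      have hvA : v ∈ A := (hIAprop e he.1).1 v (by rw [hs]; simp)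
      have huB : u ∈ B := (hIBprop e he.2).1 u (by rw [hs]; simp)
      have hvB : v ∈ B := (hIBprop e he.2).1 v (by rw [hs]; simp)
      have hsub : ({u, v} : Finset G.V) ⊆ D.filter fun x => x ∈ G.ends e := by
        intro z hz
        simp only [Finset.mem_insert, Finset.mem_singleton] at hz
        rw [Finset.mem_filter, hD, Finset.mem_inter]
        rcases hz with rfl | rfl
        · exact ⟨⟨huA, huB⟩, by rw [hs]; simp⟩
        · exact ⟨⟨hvA, hvB⟩, by rw [hs]; simp⟩
      calc 2 = ({u, v} : Finset G.V).card := (Finset.card_pair huv).symm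
      _ ≤ _ := Finset.card_le_card hsub
    have hsum1 : ((IA ∪ IB) \ (IA ∩ IB)).card
        ≤ ∑ e ∈ (IA ∪ IB) \ (IA ∩ IB), (D.filter fun x => x ∈ G.ends e).card := by
      calc ((IA ∪ IB) \ (IA ∩ IB)).card
          = ∑ e ∈ (IA ∪ IB) \ (IA ∩ IB), 1 := by simp
      _ ≤ _ := Finset.sum_le_sum h1
    have hsum2 : 2 * (IA ∩ IB).card
        ≤ ∑ e ∈ IA ∩ IB, (D.filter fun x => x ∈ G.ends e).card := by
      calc 2 * (IA ∩ IB).card = ∑ _e ∈ IA ∩ IB, 2 := by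
            rw [Finset.sum_const, smul_eq_mul, mul_comm]
      _ ≤ _ := Finset.sum_le_sum h2
    have hinter_sub : IA ∩ IB ⊆ IA ∪ IB :=
      le_trans Finset.inter_subset_left Finset.subset_union_left
    have hsplitsum : ∑ e ∈ (IA ∪ IB) \ (IA ∩ IB), (D.filter fun x => x ∈ G.ends e).card
        + ∑ e ∈ IA ∩ IB, (D.filter fun x => x ∈ G.ends e).card
        = ∑ e ∈ IA ∪ IB, (D.filter fun x => x ∈ G.ends e).card :=
      Finset.sum_sdiff hinter_sub
    have hle_univ : ∑ e ∈ IA ∪ IB, (D.filter fun x => x ∈ G.ends e).card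
        ≤ ∑ e : G.E, (D.filter fun x => x ∈ G.ends e).card :=
      Finset.sum_le_sum_of_subset (Finset.subset_univ _)
    have hcards : IA.card + IB.card = (IA ∪ IB).card + (IA ∩ IB).card :=
      (Finset.card_union_add_card_inter _ _).symm
    have hsd : ((IA ∪ IB) \ (IA ∩ IB)).card + (IA ∩ IB).card = (IA ∪ IB).card :=
      Finset.card_sdiff_add_card_eq_card hinter_sub
    omega
  -- sum over D of rho
  have hrhoD : ∑ x ∈ D, G.degree x + ∑ x ∈ D, (G.rho - G.degree x)
      = G.rho * D.card := by
    rw [← Finset.sum_add_distrib]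
    have : ∀ x ∈ D, G.degree x + (G.rho - G.degree x) = G.rho := by
      intro x _
      have := G.degree_le_rho x
      omega
    rw [Finset.sum_congr rfl this, Finset.sum_const, smul_eq_mul, mul_comm]
  -- cardinalities
  have hcardS : S'.card = A.card + B.card := by
    have : S' = Finset.univ.filter fun y : G.V ⊕ G.V => y ∈ S' := by
      ext y; simp
    rw [this, card_filter_sum]
  have hcardA : A.card = (A \ D).card + D.card :=
    (Finset.card_sdiff_add_card_eq_card hDA).symm
  have hcardB : B.card = (B \ D).card + D.card :=
    (Finset.card_sdiff_add_card_eq_card hDB).symm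
  -- density bounds for the two halves
  have hbA : (G.edgesIn (A \ D)).card ≤ G.rho * ((A \ D).card / 2) :=
    G.card_edgesIn_le_rho _
  have hbB : (G.edgesIn (B \ D)).card ≤ G.rho * ((B \ D).card / 2) :=
    G.card_edgesIn_le_rho _
  -- final arithmetic
  have hdiv : (A \ D).card / 2 + (B \ D).card / 2 + D.card ≤ S.card / 2 := by
    rw [hcard, hcardS, hcardA, hcardB]
    omega
  calc (G.double.edgesIn S).card
      = (G.edgesIn A).card + ((G.edgesIn B).card + ∑ x ∈ D, (G.rho - G.degree x)) :=
        hsplit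
    _ ≤ G.rho * ((A \ D).card / 2) + G.rho * ((B \ D).card / 2) + G.rho * D.card := by
        rw [hAcard, hBcard]
        have h5 : IA.card + IB.card + ∑ x ∈ D, (G.rho - G.degree x)
            ≤ G.rho * D.card := by
          rw [← hrhoD]
          omega
        omega
    _ = G.rho * ((A \ D).card / 2 + (B \ D).card / 2 + D.card) := by ring
    _ ≤ G.rho * (S.card / 2) := Nat.mul_le_mul_left _ hdiv

lemma isInducedSub_double : Multigraph.IsInducedSub G G.double := by
  refine ⟨⟨Sum.inl, Sum.inl_injective⟩, ⟨Sum.inl, Sum.inl_injective⟩, fun e => rfl, ?_⟩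
  rintro (e | e | p) h
  · exact ⟨e, rfl⟩
  · exfalso
    obtain ⟨u, v, huv, hs⟩ := sym2_exists_ne (G.ends e) (G.noLoops e)
    have hu : Sum.inr u ∈ G.double.ends (Sum.inr (Sum.inl e)) := by
      show Sum.inr u ∈ (G.ends e).map Sum.inr
      rw [hs]; simp
    obtain ⟨w, hw⟩ := h (Sum.inr u) hu
    simp at hw
  · exfalso
    have hu : Sum.inr p.1 ∈ G.double.ends (Sum.inr (Sum.inr p)) := by
      show Sum.inr p.1 ∈ s(Sum.inl p.1, Sum.inr p.1)
      simp
    obtain ⟨w, hw⟩ := h (Sum.inr p.1) hu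
    simp at hw

end Multigraph

/-- every multigraph G is an induced sub-multigraph of a ρ-regular
multigraph R with ω(R) ≤ ρ, where ρ = max(Δ(G), ω(G)). -/
theorem stmt_11 (G : Multigraph) :
    ∃ R : Multigraph, Multigraph.IsInducedSub G R ∧
      (∀ x : R.V, R.degree x = max G.maxDegree G.density) ∧
      R.density ≤ max G.maxDegree G.density := by
  exact ⟨G.double, G.isInducedSub_double, G.double_degree, G.double_density_le⟩
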